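/- Let k be a field of characteristic zero, (A, ∗, ∘) a pre-Poisson algebra over k and (B, ⋄) a perm algebra over k. Then (A ⊗ B, ·, [−,−]), with the induced product · and the induced bracket [−,−], is a Poisson algebra. -/
import Mathlib


open TensorProduct

noncomputable section

def IsZinbiel {k A : Type} [Field k] [AddCommGroup A] [Module k A]
    (ast : A →ₗ[k] A →ₗ[k] A) : Prop :=
  ∀ a₁ a₂ a₃ : A, ast a₁ (ast a₂ a₃) = ast (ast a₁ a₂) a₃ + ast (ast a₂ a₁) a₃

def IsPreLie {k A : Type} [Field k] [AddCommGroup A] [Module k A]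
    (circ : A →ₗ[k] A →ₗ[k] A) : Prop :=
  ∀ a₁ a₂ a₃ : A,
    circ (circ a₁ a₂) a₃ - circ a₁ (circ a₂ a₃)
      = circ (circ a₂ a₁) a₃ - circ a₂ (circ a₁ a₃)

def IsPerm {k B : Type} [Field k] [AddCommGroup B] [Module k B]
    (dia : B →ₗ[k] B →ₗ[k] B) : Prop :=
  ∀ b₁ b₂ b₃ : B,
    dia b₁ (dia b₂ b₃) = dia (dia b₁ b₂) b₃ ∧
    dia (dia b₁ b₂) b₃ = dia (dia b₂ b₁) b₃

def IsPrePoisson {k A : Type} [Field k] [AddCommGroup A] [Module k A]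
    (ast circ : A →ₗ[k] A →ₗ[k] A) : Prop :=
  IsZinbiel ast ∧ IsPreLie circ ∧
  (∀ a₁ a₂ a₃ : A,
    ast (circ a₁ a₂ - circ a₂ a₁) a₃ = circ a₁ (ast a₂ a₃) - ast a₂ (circ a₁ a₃)) ∧
  (∀ a₁ a₂ a₃ : A,
    circ (ast a₁ a₂ + ast a₂ a₁) a₃ = ast a₁ (circ a₂ a₃) + ast a₂ (circ a₁ a₃))

def IsPoisson {k P : Type} [Field k] [AddCommGroup P] [Module k P]
    (mul br : P →ₗ[k] P →ₗ[k] P) : Prop :=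
  (∀ u v : P, mul u v = mul v u) ∧
  (∀ u v w : P, mul (mul u v) w = mul u (mul v w)) ∧
  (∀ u v : P, br u v = - br v u) ∧
  (∀ u v w : P, br (br u v) w + br (br v w) u + br (br w u) v = 0) ∧
  (∀ u v w : P, br u (mul v w) = mul (br u v) w + mul v (br u w))

def idm (k M : Type) [Field k] [AddCommGroup M] [Module k M] : M →ₗ[k] M :=
  LinearMap.id

def tau (k M : Type) [Field k] [AddCommGroup M] [Module k M] :
    M ⊗[k] M →ₗ[k] M ⊗[k] M :=
  (TensorProduct.comm k M M).toLinearMap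

def unassoc (k M : Type) [Field k] [AddCommGroup M] [Module k M] :
    M ⊗[k] (M ⊗[k] M) →ₗ[k] (M ⊗[k] M) ⊗[k] M :=
  (TensorProduct.assoc k M M M).symm.toLinearMap

def intch (k A B : Type) [Field k] [AddCommGroup A] [Module k A]
    [AddCommGroup B] [Module k B] :
    (A ⊗[k] A) ⊗[k] (B ⊗[k] B) →ₗ[k] (A ⊗[k] B) ⊗[k] (A ⊗[k] B) :=
  (TensorProduct.tensorTensorTensorComm k A A B B).toLinearMap

def IsZinbielCo {k A : Type} [Field k] [AddCommGroup A] [Module k A]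
    (ϑ : A →ₗ[k] A ⊗[k] A) : Prop :=
  ∀ a : A,
    TensorProduct.map ϑ (idm k A) (ϑ a)
      + TensorProduct.map (tau k A) (idm k A) (TensorProduct.map ϑ (idm k A) (ϑ a))
    = unassoc k A (TensorProduct.map (idm k A) ϑ (ϑ a))

def IsPermCo {k B : Type} [Field k] [AddCommGroup B] [Module k B]
    (ν : B →ₗ[k] B ⊗[k] B) : Prop :=
  ∀ b : B,
    TensorProduct.map ν (idm k B) (ν b)
      = unassoc k B (TensorProduct.map (idm k B) ν (ν b)) ∧
    TensorProduct.map ν (idm k B) (ν b)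
      = TensorProduct.map (tau k B) (idm k B) (TensorProduct.map ν (idm k B) (ν b))

def IsPreLieCo {k A : Type} [Field k] [AddCommGroup A] [Module k A]
    (θ : A →ₗ[k] A ⊗[k] A) : Prop :=
  ∀ a : A,
    unassoc k A (TensorProduct.map (idm k A) θ (θ a))
      - TensorProduct.map (tau k A) (idm k A)
          (unassoc k A (TensorProduct.map (idm k A) θ (θ a)))
    = TensorProduct.map θ (idm k A) (θ a)
      - TensorProduct.map (tau k A) (idm k A) (TensorProduct.map θ (idm k A) (θ a))

def Zexp {k A : Type} [Field k] [AddCommGroup A] [Module k A]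
    (ast : A →ₗ[k] A →ₗ[k] A) {p : ℕ} (x y : Fin p → A) : (A ⊗[k] A) ⊗[k] A :=
  ∑ i : Fin p, ∑ j : Fin p,
    (((ast (x i) (x j)) ⊗ₜ[k] (y j)) ⊗ₜ[k] (y i)
      + ((y j) ⊗ₜ[k] (ast (x i) (x j))) ⊗ₜ[k] (y i)
      + ((x i) ⊗ₜ[k] (x j)) ⊗ₜ[k] (ast (y i) (y j))
      + ((x j) ⊗ₜ[k] (x i)) ⊗ₜ[k] (ast (y i) (y j))
      - ((x i) ⊗ₜ[k] (ast (y i) (x j))) ⊗ₜ[k] (y j)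
      - ((x j) ⊗ₜ[k] (ast (x i) (y j))) ⊗ₜ[k] (y i)
      - ((ast (x i) (y j)) ⊗ₜ[k] (x j)) ⊗ₜ[k] (y i)
      - ((ast (y i) (x j)) ⊗ₜ[k] (x i)) ⊗ₜ[k] (y j))

def PLexp {k A : Type} [Field k] [AddCommGroup A] [Module k A]
    (circ : A →ₗ[k] A →ₗ[k] A) {p : ℕ} (x y : Fin p → A) : (A ⊗[k] A) ⊗[k] A :=
  ∑ i : Fin p, ∑ j : Fin p,
    (((circ (x i) (x j)) ⊗ₜ[k] (y j)) ⊗ₜ[k] (y i)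
      + ((x j) ⊗ₜ[k] (circ (x i) (y j))) ⊗ₜ[k] (y i)
      + ((circ (y i) (x j)) ⊗ₜ[k] (x i)) ⊗ₜ[k] (y j)
      + ((x j) ⊗ₜ[k] (x i)) ⊗ₜ[k] (circ (y i) (y j))
      - ((y j) ⊗ₜ[k] (circ (x i) (x j))) ⊗ₜ[k] (y i)
      - ((x i) ⊗ₜ[k] (circ (y i) (x j))) ⊗ₜ[k] (y j)
      - ((circ (x i) (y j)) ⊗ₜ[k] (x j)) ⊗ₜ[k] (y i)
      - ((x i) ⊗ₜ[k] (x j)) ⊗ₜ[k] (circ (y i) (y j)))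

def AYexp {k P : Type} [Field k] [AddCommGroup P] [Module k P]
    (m : P →ₗ[k] P →ₗ[k] P) {ι : Type} [Fintype ι] (u v : ι → P) :
    (P ⊗[k] P) ⊗[k] P :=
  ∑ α : ι, ∑ β : ι,
    (((m (u α) (u β)) ⊗ₜ[k] (v α)) ⊗ₜ[k] (v β)
      + ((u α) ⊗ₜ[k] (m (v α) (u β))) ⊗ₜ[k] (v β)
      - ((u β) ⊗ₜ[k] (u α)) ⊗ₜ[k] (m (v α) (v β)))

def CYexp {k P : Type} [Field k] [AddCommGroup P] [Module k P]
    (br : P →ₗ[k] P →ₗ[k] P) {ι : Type} [Fintype ι] (u v : ι → P) :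
    (P ⊗[k] P) ⊗[k] P :=
  ∑ α : ι, ∑ β : ι,
    (((br (u α) (u β)) ⊗ₜ[k] (v α)) ⊗ₜ[k] (v β)
      + ((u α) ⊗ₜ[k] (u β)) ⊗ₜ[k] (br (v α) (v β))
      + ((u α) ⊗ₜ[k] (br (v α) (u β))) ⊗ₜ[k] (v β))

def sharp (k : Type) [Field k] {V : Type} [AddCommGroup V] [Module k V]
    (s : V ⊗[k] V) (ξ : V →ₗ[k] k) : V :=
  TensorProduct.lid k V (LinearMap.rTensor V ξ s)

abbrev PermB (k : Type) [Field k] : Type := ((ℤ × ℤ) × Fin 2) →₀ k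

def bB (k : Type) [Field k] (i₁ i₂ : ℤ) (s : Fin 2) : PermB k :=
  Finsupp.single ((i₁, i₂), s) 1

private lemma add3aux {M : Type} [AddCommGroup M] {a b c : M}
    (ha : a = 0) (hb : b = 0) (hc : c = a + b) : c = 0 := by
  rw [hc, ha, hb, add_zero]

theorem statement1 (k A B : Type) [Field k] [CharZero k]
    [AddCommGroup A] [Module k A] [AddCommGroup B] [Module k B]
    (ast circ : A →ₗ[k] A →ₗ[k] A) (hA : IsPrePoisson ast circ)
    (dia : B →ₗ[k] B →ₗ[k] B) (hdia : IsPerm dia)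
    (m : A ⊗[k] B →ₗ[k] A ⊗[k] B →ₗ[k] A ⊗[k] B)
    (hm : ∀ (a₁ a₂ : A) (b₁ b₂ : B),
      m (a₁ ⊗ₜ[k] b₁) (a₂ ⊗ₜ[k] b₂)
        = (ast a₁ a₂) ⊗ₜ[k] (dia b₁ b₂) + (ast a₂ a₁) ⊗ₜ[k] (dia b₂ b₁))
    (br : A ⊗[k] B →ₗ[k] A ⊗[k] B →ₗ[k] A ⊗[k] B)
    (hbr : ∀ (a₁ a₂ : A) (b₁ b₂ : B),
      br (a₁ ⊗ₜ[k] b₁) (a₂ ⊗ₜ[k] b₂)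
        = (circ a₁ a₂) ⊗ₜ[k] (dia b₁ b₂) - (circ a₂ a₁) ⊗ₜ[k] (dia b₂ b₁))
    :
    IsPoisson m br := by
  obtain ⟨hz, hPL, hL1, hL2⟩ := hA
  have q1 : ∀ x y z : B, dia x (dia y z) = dia (dia x y) z := fun x y z => (hdia x y z).1
  have q3 : ∀ x y z : B, dia (dia x y) z = dia (dia y x) z := fun x y z => (hdia x y z).2
  refine ⟨?_, ?_, ?_, ?_, ?_⟩
  · -- commutativity
    intro u v
    induction u using TensorProduct.induction_on with
    | zero => simp
    | tmul a₁ b₁ =>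
      induction v using TensorProduct.induction_on with
      | zero => simp
      | tmul a₂ b₂ => rw [hm, hm]; abel
      | add x y hx hy => simp only [map_add, LinearMap.add_apply, hx, hy]
    | add x y hx hy => simp only [map_add, LinearMap.add_apply, hx, hy]
  · -- associativity
    intro u v w
    induction u using TensorProduct.induction_on with
    | zero => simp
    | tmul a₁ b₁ =>
      induction v using TensorProduct.induction_on with
      | zero => simp
      | tmul a₂ b₂ =>
        induction w using TensorProduct.induction_on with
        | zero => simp
        | tmul a₃ b₃ =>
          simp only [hm, map_add, LinearMap.add_apply]
          simp only [q1, q3 b₂ b₁ b₃, q3 b₃ b₁ b₂, q3 b₃ b₂ b₁]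
          rw [hz a₁ a₂ a₃, hz a₁ a₃ a₂, hz a₃ a₁ a₂, hz a₃ a₂ a₁]
          simp only [add_tmul]
          abel
        | add x y hx hy => simp only [map_add, LinearMap.add_apply, hx, hy]
      | add x y hx hy =>
        simp only [map_add, LinearMap.add_apply] at hx hy ⊢
        rw [hx, hy]
    | add x y hx hy =>
      simp only [map_add, LinearMap.add_apply] at hx hy ⊢
      rw [hx, hy]
  · -- antisymmetry
    intro u v
    induction u using TensorProduct.induction_on with
    | zero => simp
    | tmul a₁ b₁ =>
      induction v using TensorProduct.induction_on with
      | zero => simp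
      | tmul a₂ b₂ => rw [hbr, hbr]; abel
      | add x y hx hy =>
        simp only [map_add, LinearMap.add_apply, hx, hy]; abel
    | add x y hx hy =>
      simp only [map_add, LinearMap.add_apply, hx, hy]; abel
  · -- Jacobi
    intro u v w
    induction u using TensorProduct.induction_on with
    | zero => simp
    | tmul a₁ b₁ =>
      induction v using TensorProduct.induction_on with
      | zero => simp
      | tmul a₂ b₂ =>
        induction w using TensorProduct.induction_on with
        | zero => simp
        | tmul a₃ b₃ =>
          simp only [hbr, map_sub, LinearMap.sub_apply]
          simp only [q1, q3 b₂ b₁ b₃, q3 b₃ b₁ b₂, q3 b₃ b₂ b₁]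
          rw [show circ (circ a₁ a₂) a₃
                = circ a₁ (circ a₂ a₃) + (circ (circ a₂ a₁) a₃ - circ a₂ (circ a₁ a₃)) from by
              rw [← hPL a₁ a₂ a₃]; abel,
            show circ (circ a₂ a₃) a₁
                = circ a₂ (circ a₃ a₁) + (circ (circ a₃ a₂) a₁ - circ a₃ (circ a₂ a₁)) from by
              rw [← hPL a₂ a₃ a₁]; abel,
            show circ (circ a₃ a₁) a₂
                = circ a₃ (circ a₁ a₂) + (circ (circ a₁ a₃) a₂ - circ a₁ (circ a₃ a₂)) from by
              rw [← hPL a₃ a₁ a₂]; abel]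
          simp only [add_tmul, sub_tmul]
          abel
        | add x y hx hy =>
          exact add3aux hx hy (by simp only [map_add, LinearMap.add_apply]; abel)
      | add x y hx hy =>
        exact add3aux hx hy (by simp only [map_add, LinearMap.add_apply]; abel)
    | add x y hx hy =>
      exact add3aux hx hy (by simp only [map_add, LinearMap.add_apply]; abel)
  · -- Leibniz
    intro u v w
    induction u using TensorProduct.induction_on with
    | zero => simp
    | tmul a₁ b₁ =>
      induction v using TensorProduct.induction_on with
      | zero => simp
      | tmul a₂ b₂ =>
        induction w using TensorProduct.induction_on with
        | zero => simp
        | tmul a₃ b₃ =>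
          simp only [hm, hbr, map_add, map_sub, LinearMap.add_apply, LinearMap.sub_apply]
          simp only [q1, q3 b₂ b₁ b₃, q3 b₃ b₁ b₂, q3 b₃ b₂ b₁]
          rw [show circ a₁ (ast a₂ a₃)
                = ast (circ a₁ a₂) a₃ - ast (circ a₂ a₁) a₃ + ast a₂ (circ a₁ a₃) from by
              have h := hL1 a₁ a₂ a₃
              simp only [map_sub, LinearMap.sub_apply] at h
              rw [h]; abel,
            show circ a₁ (ast a₃ a₂)
                = ast (circ a₁ a₃) a₂ - ast (circ a₃ a₁) a₂ + ast a₃ (circ a₁ a₂) from by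
              have h := hL1 a₁ a₃ a₂
              simp only [map_sub, LinearMap.sub_apply] at h
              rw [h]; abel,
            show circ (ast a₂ a₃) a₁
                = ast a₂ (circ a₃ a₁) + ast a₃ (circ a₂ a₁) - circ (ast a₃ a₂) a₁ from by
              have h := hL2 a₂ a₃ a₁
              simp only [map_add, LinearMap.add_apply] at h
              rw [eq_sub_iff_add_eq]; exact h]
          simp only [add_tmul, sub_tmul]
          abel
        | add x y hx hy =>
          simp only [map_add, LinearMap.add_apply, hx, hy]; abel
      | add x y hx hy =>
        simp only [map_add, LinearMap.add_apply, hx, hy]; abel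
    | add x y hx hy =>
      simp only [map_add, LinearMap.add_apply, hx, hy]; abel
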